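/- In the setting of the previous statement, the translated position error of the corrupted dual quaternion error δQ_ρ = δq̄_ρ + ε(1/2)(δp̃_b^ρ ∘ δq̄_ρ) with δq̄_ρ = δq̄ ∘ q_ρ is δp̃_b^ρ = (δq̄ ∘ p̃_ρ ∘ q_ρ + δp̃_b ∘ δq̄ ∘ q_ρ) ∘ q_ρ* ∘ δq̄*; moreover δp̃_b^ρ is a pure quaternion, and if p̃_ρ = 0 then δp̃_b^ρ = δp̃_b. -/

import Mathlib

/-- Dual quaternions as pairs (principal part, dual part). -/
abbrev DQ := Quaternion ℝ × Quaternion ℝ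

/-- Dual quaternion product: `(a + εb) ∘ (c + εd) = a∘c + ε(a∘d + b∘c)`. -/
noncomputable def dmul (a b : DQ) : DQ := (a.1 * b.1, a.1 * b.2 + a.2 * b.1)

/-- The translated position error of the corrupted dual quaternion error
`δQ_ρ = δq̄_ρ + ε(1/2)(δp̃_b^ρ ∘ δq̄_ρ)`, `δq̄_ρ = δq̄ ∘ q_ρ`, is
`δp̃_b^ρ = (δq̄ ∘ p̃_ρ ∘ q_ρ + δp̃_b ∘ δq̄ ∘ q_ρ) ∘ q_ρ* ∘ δq̄*`; it is a pure
quaternion, and if `p̃_ρ = 0` then `δp̃_b^ρ = δp̃_b`. -/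
theorem corrupted_position_error (δq qρ δp pρ : Quaternion ℝ)
    (hδq : ‖δq‖ = 1) (hqρ : ‖qρ‖ = 1) (hδp : δp.re = 0) (hpρ : pρ.re = 0) :
    ((δq * pρ * qρ + δp * δq * qρ) * star qρ * star δq).re = 0
    ∧ (dmul (δq, (1 / 2 : Quaternion ℝ) * (δp * δq))
        (qρ, (1 / 2 : Quaternion ℝ) * (pρ * qρ))).2 =
          (1 / 2 : Quaternion ℝ) *
            (((δq * pρ * qρ + δp * δq * qρ) * star qρ * star δq) * (δq * qρ))
    ∧ (pρ = 0 → (δq * pρ * qρ + δp * δq * qρ) * star qρ * star δq = δp) := by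
  have hδq1 : star δq * δq = 1 := by
    rw [Quaternion.star_mul_self]
    norm_cast
    rw [Quaternion.normSq_eq_norm_mul_self, hδq]; norm_num
  have hδq2 : δq * star δq = 1 := by
    rw [Quaternion.self_mul_star]
    norm_cast
    rw [Quaternion.normSq_eq_norm_mul_self, hδq]; norm_num
  have hqρ1 : star qρ * qρ = 1 := by
    rw [Quaternion.star_mul_self]
    norm_cast
    rw [Quaternion.normSq_eq_norm_mul_self, hqρ]; norm_num
  have hqρ2 : qρ * star qρ = 1 := by
    rw [Quaternion.self_mul_star]
    norm_cast
    rw [Quaternion.normSq_eq_norm_mul_self, hqρ]; norm_num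
  have key : (δq * pρ * qρ + δp * δq * qρ) * star qρ * star δq
      = δq * pρ * star δq + δp := by
    rw [add_mul, add_mul]
    have h1 : δq * pρ * qρ * star qρ = δq * pρ := by
      rw [mul_assoc, hqρ2, mul_one]
    have h2 : δp * δq * qρ * star qρ = δp * δq := by
      rw [mul_assoc, hqρ2, mul_one]
    rw [h1, h2, mul_assoc δp, hδq2, mul_one]
  refine ⟨?_, ?_, ?_⟩
  · rw [key]
    simp only [Quaternion.re_add, hδp, add_zero]
    have h3 : (δq * pρ * star δq).re = (pρ * star δq * δq).re := by
      simp [Quaternion.re_mul]; ring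
    rw [h3, mul_assoc, hδq1, mul_one, hpρ]
  · simp only [dmul, key]
    have h3 : δq * pρ * star δq * (δq * qρ) = δq * pρ * qρ := by
      rw [mul_assoc (δq * pρ), ← mul_assoc (star δq), hδq1, one_mul]
    have hc : ∀ x : Quaternion ℝ, (1 / 2 : Quaternion ℝ) * x = x * (1 / 2) := by
      intro x
      rw [show ((1 / 2 : Quaternion ℝ)) = (((1 / 2 : ℝ) : Quaternion ℝ)) by
        rw [Quaternion.coe_div, Quaternion.coe_one]; norm_num; norm_cast,
        Quaternion.coe_commutes]
    rw [add_mul, h3, mul_add]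
    congr 1
    · rw [hc, ← mul_assoc, ← hc, mul_assoc, ← mul_assoc δq]
    · rw [mul_assoc, mul_assoc δp]
  · intro h
    rw [key, h, mul_zero, zero_mul, zero_add]
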